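/- For all integers a and k and every natural number ℓ, the factorial ℓ! divides the integer a^ℓ · ∏_{j=0}^{ℓ−1} (k + j·a); equivalently, a^ℓ · ∏_{j=0}^{ℓ−1} (k + j·a) / ℓ! is an integer. (Lemma 2.9.) -/

import Mathlib

/-- The ascending Pochhammer polynomial evaluated at an integer is the product of
consecutive integers. -/
lemma ascPochhammer_smeval_int (m : ℤ) : ∀ ℓ : ℕ,
    (ascPochhammer ℕ ℓ).smeval m = ∏ j ∈ Finset.range ℓ, (m + j)
  | 0 => by simp [ascPochhammer_zero, Polynomial.smeval_one]
  | ℓ + 1 => by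
    rw [ascPochhammer_succ_right, Polynomial.smeval_mul, ascPochhammer_smeval_int m ℓ,
      Finset.prod_range_succ]
    congr 1
    simp [Polynomial.smeval_add, Polynomial.smeval_X, Polynomial.smeval_natCast]

/-- The factorial `ℓ!` divides any product of `ℓ` consecutive integers. -/
lemma factorial_dvd_prod_consec (m : ℤ) (ℓ : ℕ) :
    (ℓ.factorial : ℤ) ∣ ∏ j ∈ Finset.range ℓ, (m + j) := by
  refine ⟨Ring.multichoose m ℓ, ?_⟩
  rw [← ascPochhammer_smeval_int m ℓ, ← Ring.factorial_nsmul_multichoose_eq_ascPochhammer]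
  simp [nsmul_eq_mul]

/-- Product congruence for `Int.ModEq`. -/
lemma Int.ModEq.prod' {n : ℤ} {s : Finset ℕ} {f g : ℕ → ℤ}
    (h : ∀ i ∈ s, f i ≡ g i [ZMOD n]) :
    (∏ i ∈ s, f i) ≡ ∏ i ∈ s, g i [ZMOD n] := by
  classical
  induction s using Finset.induction_on with
  | empty => simp [Int.ModEq.refl]
  | insert _ _ hx ih =>
    rename_i x s'
    rw [Finset.prod_insert hx, Finset.prod_insert hx]
    exact (h x (Finset.mem_insert_self x s')).mul
      (ih fun i hi => h i (Finset.mem_insert_of_mem hi))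

/-- **Lemma 2.9**: for all integers `a`, `k` and every natural number `ℓ`, the factorial `ℓ!`
divides `a^ℓ · ∏_{j=0}^{ℓ−1} (k + j·a)`; i.e. `a^ℓ ∏_{j<ℓ} (k + ja) / ℓ!` is an integer. -/
theorem factorial_dvd_pow_mul_prod (a k : ℤ) (ℓ : ℕ) :
    (ℓ.factorial : ℤ) ∣ a ^ ℓ * ∏ j ∈ Finset.range ℓ, (k + j * a) := by
  rw [Int.natCast_dvd]
  rw [Nat.dvd_iff_prime_pow_dvd_dvd]
  intro p e hp hpe
  rw [← Int.natCast_dvd, Nat.cast_pow]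
  have hp' : Prime (p : ℤ) := Nat.prime_iff_prime_int.mp hp
  by_cases hpa : (p : ℤ) ∣ a
  · -- `p` divides `a`: then `p^ℓ ∣ a^ℓ` and `e ≤ ℓ`.
    have he : e ≤ ℓ := by
      by_contra hlt
      push_neg at hlt
      have h1 : (e : ℕ∞) ≤ emultiplicity p ℓ.factorial :=
        pow_dvd_iff_le_emultiplicity.mp hpe
      have h2 : emultiplicity p ℓ.factorial ≤ (ℓ / (p - 1) : ℕ) :=
        Nat.Prime.emultiplicity_factorial_le_div_pred hp ℓ
      have h3 : (e : ℕ∞) ≤ (ℓ / (p - 1) : ℕ) := h1.trans h2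
      have h4 : e ≤ ℓ / (p - 1) := by exact_mod_cast h3
      have h5 : ℓ / (p - 1) ≤ ℓ := Nat.div_le_self _ _
      omega
    exact Dvd.dvd.mul_right
      ((pow_dvd_pow (p : ℤ) he).trans (pow_dvd_pow_of_dvd hpa ℓ)) _
  · -- `p` coprime to `a`: invert `a` modulo `p^e`.
    have hcop : IsCoprime ((p : ℤ) ^ e) a :=
      (hp'.coprime_iff_not_dvd.mpr hpa).pow_left
    obtain ⟨u, v, huv⟩ := hcop.symm
    -- `u * a ≡ 1 [ZMOD p^e]`
    have hmod : u * a ≡ 1 [ZMOD (p : ℤ) ^ e] := by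
      have : ((p : ℤ) ^ e) ∣ u * a - 1 := ⟨-v, by linarith⟩
      exact Int.ModEq.symm (Int.modEq_iff_dvd.mpr (by simpa using this))
    -- each factor `k + j*a ≡ a * (u*k + j)`
    have hterm : ∀ j ∈ Finset.range ℓ,
        (k + j * a) ≡ a * (u * k + j) [ZMOD (p : ℤ) ^ e] := by
      intro j _
      have h1 : (1 : ℤ) * k ≡ (u * a) * k [ZMOD (p : ℤ) ^ e] :=
        (hmod.symm.mul_right k)
      calc k + j * a = 1 * k + j * a := by ring
        _ ≡ (u * a) * k + j * a [ZMOD (p : ℤ) ^ e] := h1.add_right _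
        _ = a * (u * k + j) := by ring
    have hprod : (∏ j ∈ Finset.range ℓ, (k + j * a)) ≡
        ∏ j ∈ Finset.range ℓ, (a * (u * k + j)) [ZMOD (p : ℤ) ^ e] :=
      Int.ModEq.prod' hterm
    have heq : (∏ j ∈ Finset.range ℓ, (a * (u * k + j)))
        = a ^ ℓ * ∏ j ∈ Finset.range ℓ, (u * k + j) := by
      rw [Finset.prod_mul_distrib, Finset.prod_const, Finset.card_range]
    have hdvd : ((p : ℤ) ^ e) ∣ ∏ j ∈ Finset.range ℓ, (u * k + j) := by
      have h1 : (ℓ.factorial : ℤ) ∣ ∏ j ∈ Finset.range ℓ, (u * k + j) :=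
        factorial_dvd_prod_consec (u * k) ℓ
      have h2 : ((p : ℤ) ^ e) ∣ (ℓ.factorial : ℤ) := by
        exact_mod_cast Int.natCast_dvd_natCast.mpr hpe
      exact h2.trans h1
    have : ((p : ℤ) ^ e) ∣ ∏ j ∈ Finset.range ℓ, (k + j * a) := by
      have h0 : (∏ j ∈ Finset.range ℓ, (k + j * a)) ≡ 0 [ZMOD (p : ℤ) ^ e] := by
        calc (∏ j ∈ Finset.range ℓ, (k + j * a))
            ≡ a ^ ℓ * ∏ j ∈ Finset.range ℓ, (u * k + j) [ZMOD (p : ℤ) ^ e] := by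
              rw [← heq]; exact hprod
          _ ≡ a ^ ℓ * 0 [ZMOD (p : ℤ) ^ e] :=
              (Int.modEq_zero_iff_dvd.mpr hdvd).mul_left _
          _ = 0 := by ring
      exact Int.modEq_zero_iff_dvd.mp h0
    exact this.mul_left _
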